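/- Let G = (V ∪ {a}, E) and M be graphs on disjoint vertex sets. The module-substitution graph G_a[M] is a comparability graph if and only if both G and M are comparability graphs. -/

import Mathlib

section Defs

variable {V : Type*}

/-- Two letters alternate in a word: the subword over `{a,b}` has no equal consecutive letters. -/
def Alternates [DecidableEq V] (w : List V) (a b : V) : Prop :=
  (w.filter (fun x => decide (x = a ∨ x = b))).Chain' (· ≠ ·)

/-- A word over the vertex set represents a graph: every vertex occurs, and two distinct
vertices are adjacent iff they alternate in the word. -/
def Represents [DecidableEq V] (w : List V) (G : SimpleGraph V) : Prop :=
  (∀ v : V, v ∈ w) ∧ ∀ a b : V, a ≠ b → (G.Adj a b ↔ Alternates w a b)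

def WordRepresentable [DecidableEq V] (G : SimpleGraph V) : Prop :=
  ∃ w : List V, Represents w G

/-- Every letter occurs exactly `k` times. -/
def IsKUniform [DecidableEq V] (w : List V) (k : ℕ) : Prop :=
  ∀ v : V, w.count v = k

/-- `k` is the representation number of `G`. -/
def RepNumIs [DecidableEq V] (G : SimpleGraph V) (k : ℕ) : Prop :=
  IsLeast {n : ℕ | ∃ w : List V, IsKUniform w n ∧ Represents w G} k

/-- `p` is a permutation of the vertex set (as a list). -/
def IsPermOn (p : List V) : Prop := p.Nodup ∧ ∀ v : V, v ∈ p

/-- `G` is representable by a concatenation of `k` permutations of its vertex set. -/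
def PermRepresents [DecidableEq V] (G : SimpleGraph V) (k : ℕ) : Prop :=
  ∃ ps : List (List V), ps.length = k ∧ (∀ p ∈ ps, IsPermOn p) ∧ Represents ps.flatten G

/-- `k` is the permutation-representation number of `G`. -/
def PrnIs [DecidableEq V] (G : SimpleGraph V) (k : ℕ) : Prop :=
  IsLeast {n : ℕ | PermRepresents G n} k

/-- A comparability graph: a graph admitting a transitive orientation of its edges. -/
def IsComparability (G : SimpleGraph V) : Prop :=
  ∃ lt : V → V → Prop, Transitive lt ∧ (∀ a b, lt a b → G.Adj a b) ∧
    (∀ a b, G.Adj a b → (lt a b ↔ ¬ lt b a))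

/-- A module: every outside vertex is adjacent to all of `M` or to none of `M`. -/
def IsModule (G : SimpleGraph V) (M : Set V) : Prop :=
  ∀ x ∉ M, (∀ m ∈ M, G.Adj x m) ∨ (∀ m ∈ M, ¬ G.Adj x m)

end Defs

/-- The graph obtained from `G` by replacing the vertex `a` with the module `M`. -/
def substGraph {W V' : Type*} (G : SimpleGraph W) (a : W) (M : SimpleGraph V') :
    SimpleGraph ({x : W // x ≠ a} ⊕ V') where
  Adj x y :=
    match x, y with
    | Sum.inl u, Sum.inl v => G.Adj u.1 v.1
    | Sum.inl u, Sum.inr _ => G.Adj u.1 a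
    | Sum.inr _, Sum.inl v => G.Adj a v.1
    | Sum.inr u, Sum.inr v => M.Adj u v
  symm := ⟨by
    rintro (u | u) (v | v) h
    · exact h.symm
    · exact h.symm
    · exact h.symm
    · exact h.symm⟩
  loopless := ⟨by
    rintro (u | u) h
    · exact G.loopless.1 _ h
    · exact M.loopless.1 _ h⟩

/-- The quotient graph of a modular partition: parts are adjacent iff completely adjacent. -/
def quotientGraph {V : Type*} (G : SimpleGraph V) {n : ℕ} (Mod : Fin n → Set V) :
    SimpleGraph (Fin n) where
  Adj i j := i ≠ j ∧ ∀ a ∈ Mod i, ∀ b ∈ Mod j, G.Adj a b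
  symm := ⟨by
    rintro i j ⟨hij, h⟩
    exact ⟨hij.symm, fun a ha b hb => (h b hb a ha).symm⟩⟩
  loopless := ⟨by rintro i ⟨h, _⟩; exact h rfl⟩

/-- The lexicographical product of two graphs. -/
def lexProd {V V' : Type*} (G : SimpleGraph V) (G' : SimpleGraph V') :
    SimpleGraph (V × V') where
  Adj x y := G.Adj x.1 y.1 ∨ (x.1 = y.1 ∧ G'.Adj x.2 y.2)
  symm := ⟨by
    rintro ⟨a, a'⟩ ⟨b, b'⟩ (h | ⟨h1, h2⟩)
    · exact Or.inl h.symm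
    · exact Or.inr ⟨h1.symm, h2.symm⟩⟩
  loopless := ⟨by
    rintro ⟨a, a'⟩ (h | ⟨_, h⟩)
    · exact G.loopless.1 _ h
    · exact G'.loopless.1 _ h⟩

/-- `G_a[M]` is a comparability graph iff both `G` and `M` are. -/
theorem stmt9 {W V' : Type*} [Nonempty V'] (G : SimpleGraph W) (a : W)
    (M : SimpleGraph V') :
    IsComparability (substGraph G a M) ↔
      (IsComparability G ∧ IsComparability M) := by
  classical
  obtain ⟨m0⟩ := ‹Nonempty V'›
  constructor
  · rintro ⟨lt, htrans, hadj, hiff⟩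
    constructor
    · set e : W → ({x : W // x ≠ a} ⊕ V') :=
        fun v => if h : v = a then Sum.inr m0 else Sum.inl ⟨v, h⟩ with he
      have hAdj : ∀ u v : W, u ≠ v →
          ((substGraph G a M).Adj (e u) (e v) ↔ G.Adj u v) := by
        intro u v huv
        by_cases hu : u = a <;> by_cases hv : v = a
        · exact absurd (hu.trans hv.symm) huv
        · subst hu; simp [he, hv, substGraph]
        · subst hv; simp [he, hu, substGraph]
        · simp [he, hu, hv, substGraph]
      refine ⟨fun u v => lt (e u) (e v), fun x y z hxy hyz => htrans hxy hyz, ?_, ?_⟩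
      · intro u v h
        have huv : u ≠ v := by
          rintro rfl; exact (substGraph G a M).loopless.1 _ (hadj _ _ h)
        exact (hAdj u v huv).mp (hadj _ _ h)
      · intro u v h
        exact hiff _ _ ((hAdj u v (G.ne_of_adj h)).mpr h)
    · exact ⟨fun x y => lt (Sum.inr x) (Sum.inr y),
        fun x y z hxy hyz => htrans hxy hyz,
        fun x y h => hadj _ _ h, fun x y h => hiff _ _ h⟩
  · rintro ⟨⟨ltG, hGt, hGa, hGi⟩, ⟨ltM, hMt, hMa, hMi⟩⟩
    refine ⟨fun x y => match x, y with
      | Sum.inl u, Sum.inl v => ltG u.1 v.1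
      | Sum.inl u, Sum.inr _ => ltG u.1 a
      | Sum.inr _, Sum.inl v => ltG a v.1
      | Sum.inr x, Sum.inr y => ltM x y, ?_, ?_, ?_⟩
    · rintro (x|x) (y|y) (z|z) h1 h2
      · exact hGt h1 h2
      · exact hGt h1 h2
      · exact hGt h1 h2
      · exact h1
      · exact hGt h1 h2
      · exact absurd h1 (((hGi _ _ (hGa _ _ h2)).mp h2))
      · exact h2
      · exact hMt h1 h2
    · rintro (x|x) (y|y) h
      · exact hGa _ _ h
      · exact hGa _ _ h
      · exact hGa _ _ h
      · exact hMa _ _ h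
    · rintro (x|x) (y|y) h
      · exact hGi _ _ h
      · exact hGi _ _ h
      · exact hGi _ _ h
      · exact hMi _ _ h
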